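/- The Johnstone dcpo J = ℕ × (ℕ ∪ {ω}) with order (j,k) ≤ (m,n) iff (j = m and k ≤ n) or (n = ω and k ≤ n), equipped with the Scott topology, is a c-well-filtered space. -/
import Mathlib


universe u

/-- A set is saturated if it equals the intersection of its open neighbourhoods. -/
def IsSaturatedSet {X : Type u} [TopologicalSpace X] (A : Set X) : Prop :=
  A = ⋂₀ {U : Set X | IsOpen U ∧ A ⊆ U}

/-- A family of sets is countably filtered (under `⊆`) if every countable subfamily
has a lower bound in the family. -/
def CntFilteredFam {X : Type u} (S : Set (Set X)) : Prop :=
  ∀ T ⊆ S, T.Countable → ∃ L ∈ S, ∀ t ∈ T, L ⊆ t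

/-- A family of sets is countably directed (under `⊆`) if every countable subfamily
has an upper bound in the family. -/
def CntDirectedFam {X : Type u} (S : Set (Set X)) : Prop :=
  ∀ T ⊆ S, T.Countable → ∃ U ∈ S, ∀ t ∈ T, t ⊆ U

/-- A space is c-well-filtered if for every countably filtered family of saturated
Lindelöf subsets whose intersection is contained in an open `U`, some member is contained in `U`. -/
def CWellFiltered (X : Type u) [TopologicalSpace X] : Prop :=
  ∀ S : Set (Set X), (∀ K ∈ S, IsSaturatedSet K ∧ IsLindelof K) →
    CntFilteredFam S → ∀ U : Set X, IsOpen U → ⋂₀ S ⊆ U → ∃ K ∈ S, K ⊆ U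

/-- A subset `D` is countably directed w.r.t. `le` if every countable subset of `D`
has an upper bound in `D`. -/
def CntDirected {α : Type u} (le : α → α → Prop) (D : Set α) : Prop :=
  ∀ E ⊆ D, E.Countable → ∃ d ∈ D, ∀ e ∈ E, le e d

/-- `a` is a least upper bound of `D` w.r.t. `le`. -/
def RIsLUB {α : Type u} (le : α → α → Prop) (D : Set α) (a : α) : Prop :=
  (∀ d ∈ D, le d a) ∧ ∀ b, (∀ d ∈ D, le d b) → le a b

/-- Countably directed complete: every countably directed subset has a least upper bound. -/
def CDComplete {α : Type u} (le : α → α → Prop) : Prop :=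
  ∀ D : Set α, CntDirected le D → ∃ a, RIsLUB le D a

/-- `x` is countably way-below `y`. -/
def CWayBelow {α : Type u} (le : α → α → Prop) (x y : α) : Prop :=
  ∀ D : Set α, CntDirected le D → ∀ a, RIsLUB le D a → le y a → ∃ d ∈ D, le x d

/-- `U` is σ-Scott open: an upper set meeting every countably directed set whose sup lies in `U`. -/
def SigmaScottOpenRel {α : Type u} (le : α → α → Prop) (U : Set α) : Prop :=
  (∀ x ∈ U, ∀ y, le x y → y ∈ U) ∧
  ∀ D : Set α, CntDirected le D → ∀ a, RIsLUB le D a → a ∈ U → ∃ d ∈ D, d ∈ U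

/-- `F` is countably filtered w.r.t. `le`: every countable subset has a lower bound in `F`. -/
def CntFilteredRel {α : Type u} (le : α → α → Prop) (F : Set α) : Prop :=
  ∀ E ⊆ F, E.Countable → ∃ l ∈ F, ∀ e ∈ E, le l e

/-- Countably approximating: countably directed complete and each `x` is the sup of
the countably directed set of elements countably way-below `x`. -/
def CntApprox {α : Type u} (le : α → α → Prop) : Prop :=
  CDComplete le ∧
    ∀ x, CntDirected le {y | CWayBelow le y x} ∧ RIsLUB le {y | CWayBelow le y x} x

/-- `B` is a σ-basis: for each `x`, `B ∩ ⇓꜀x` is countably directed with sup `x`. -/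
def IsSigmaBasis {α : Type u} (le : α → α → Prop) (B : Set α) : Prop :=
  ∀ x, CntDirected le (B ∩ {y | CWayBelow le y x}) ∧
    RIsLUB le (B ∩ {y | CWayBelow le y x}) x

/-- The Scott topology on a preorder. -/
def scottTopology (L : Type u) [Preorder L] : TopologicalSpace L where
  IsOpen U := (∀ x ∈ U, ∀ y, x ≤ y → y ∈ U) ∧
    ∀ D : Set L, D.Nonempty → DirectedOn (· ≤ ·) D → ∀ a, IsLUB D a → a ∈ U → ∃ d ∈ D, d ∈ U
  isOpen_univ := by
    refine ⟨fun _ _ _ _ => trivial, ?_⟩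
    intro D hne _ a _ _
    obtain ⟨d, hd⟩ := hne
    exact ⟨d, hd, trivial⟩
  isOpen_inter := by
    rintro s t ⟨hsu, hs⟩ ⟨htu, ht⟩
    refine ⟨fun x hx y hxy => ⟨hsu x hx.1 y hxy, htu x hx.2 y hxy⟩, ?_⟩
    intro D hne hdir a ha haU
    obtain ⟨d1, hd1, hd1s⟩ := hs D hne hdir a ha haU.1
    obtain ⟨d2, hd2, hd2t⟩ := ht D hne hdir a ha haU.2
    obtain ⟨d3, hd3, h13, h23⟩ := hdir d1 hd1 d2 hd2
    exact ⟨d3, hd3, hsu d1 hd1s d3 h13, htu d2 hd2t d3 h23⟩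
  isOpen_sUnion := by
    intro S hS
    refine ⟨?_, ?_⟩
    · intro x hx y hxy
      obtain ⟨s, hsS, hxs⟩ := hx
      exact ⟨s, hsS, (hS s hsS).1 x hxs y hxy⟩
    · intro D hne hdir a ha haU
      obtain ⟨s, hsS, has⟩ := haU
      obtain ⟨d, hd, hds⟩ := (hS s hsS).2 D hne hdir a ha has
      exact ⟨d, hd, s, hsS, hds⟩

/-- Johnstone's dcpo `J = ℕ × (ℕ ∪ {ω})`. -/
def JSpace : Type := ℕ × WithTop ℕ

/-- The Johnstone order: `(j,k) ≤ (m,n)` iff (`j = m` and `k ≤ n`) or (`n = ω` and `k ≤ n`). -/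
instance : Preorder JSpace where
  le a b := (a.1 = b.1 ∧ a.2 ≤ b.2) ∨ (b.2 = (⊤ : WithTop ℕ) ∧ a.2 ≤ b.2)
  le_refl a := Or.inl ⟨rfl, le_refl _⟩
  le_trans a b c hab hbc := by
    rcases hbc with ⟨h1, h2⟩ | ⟨h1, h2⟩
    · rcases hab with ⟨g1, g2⟩ | ⟨g1, g2⟩
      · exact Or.inl ⟨g1.trans h1, g2.trans h2⟩
      · refine Or.inr ⟨?_, ?_⟩
        · exact top_le_iff.mp (g1 ▸ h2)
        · exact le_top.trans (top_le_iff.mp (g1 ▸ h2)).ge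
    · exact Or.inr ⟨h1, h1 ▸ le_top⟩

/-- Johnstone's dcpo with the Scott topology is c-well-filtered. -/
instance : Countable JSpace := inferInstanceAs (Countable (ℕ × WithTop ℕ))

theorem stmt5 : @CWellFiltered JSpace (scottTopology JSpace) := by
  intro S _hS hfilt U _hU hsub
  classical
  have hchoice : ∀ x : JSpace, x ∉ U → ∃ K ∈ S, x ∉ K := by
    intro x hx
    by_contra h
    push_neg at h
    exact hx (hsub fun K hK => h K hK)
  choose f hfS hfx using hchoice
  set T : Set (Set JSpace) := Set.range (fun p : {x : JSpace // x ∉ U} => f p.1 p.2) with hT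
  have hTS : T ⊆ S := by
    rintro K ⟨p, rfl⟩
    exact hfS p.1 p.2
  have hTc : T.Countable := Set.countable_range _
  obtain ⟨L, hLS, hL⟩ := hfilt T hTS hTc
  refine ⟨L, hLS, fun y hy => ?_⟩
  by_contra hyU
  exact hfx y hyU (hL _ ⟨⟨y, hyU⟩, rfl⟩ hy)
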